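/- For every positive integer m, the m-book graph B_m (the Cartesian product of the star K_{1,m} with the path P_2) belongs to G^cs: s(B_m,w) = cs(B_m,w) for every positive weight function w. -/

import Mathlib

open SimpleGraph
open scoped Classical

variable {V : Type*} [Fintype V]

noncomputable def setWeight (w : V → ℝ) (A : Set V) : ℝ :=
  ∑ v : V, if v ∈ A then w v else 0

def IsComponentOf (G : SimpleGraph V) (S C : Set V) : Prop :=
  ∃ c : (G.induce S).ConnectedComponent,
    C = Subtype.val '' {x : ↥S | (G.induce S).connectedComponentMk x = c}

def Touches (G : SimpleGraph V) (C D : Set V) : Prop :=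
  ∃ a ∈ C, ∃ b ∈ D, G.Adj a b

def IsSafeSet (G : SimpleGraph V) (w : V → ℝ) (S : Set V) : Prop :=
  S.Nonempty ∧ S ≠ Set.univ ∧
    ∀ C D : Set V, IsComponentOf G S C → IsComponentOf G Sᶜ D → Touches G C D →
      setWeight w D ≤ setWeight w C

def IsConnSafeSet (G : SimpleGraph V) (w : V → ℝ) (S : Set V) : Prop :=
  IsSafeSet G w S ∧ (G.induce S).Connected

noncomputable def safeNumber (G : SimpleGraph V) (w : V → ℝ) : ℝ :=
  sInf (setWeight w '' {S | IsSafeSet G w S})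

noncomputable def connSafeNumber (G : SimpleGraph V) (w : V → ℝ) : ℝ :=
  sInf (setWeight w '' {S | IsConnSafeSet G w S})

def InGcs (G : SimpleGraph V) : Prop :=
  ∀ w : V → ℝ, (∀ v, 0 < w v) → safeNumber G w = connSafeNumber G w

/-- The `m`-book graph `B_m`, the Cartesian product of the star `K_{1,m}` and `P₂`. -/
def bookGraph (m : ℕ) : SimpleGraph ((Fin 1 ⊕ Fin m) × Fin 2) :=
  (completeBipartiteGraph (Fin 1) (Fin m)) □ (pathGraph 2)


set_option linter.unusedSectionVars false

section Comp
variable {G : SimpleGraph V} {S C : Set V}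

lemma isComponentOf_self (hne : S.Nonempty) (hconn : (G.induce S).Preconnected) :
    IsComponentOf G S S := by
  obtain ⟨x0, hx0⟩ := hne
  refine ⟨(G.induce S).connectedComponentMk ⟨x0, hx0⟩, ?_⟩
  have h1 : {x : ↥S | (G.induce S).connectedComponentMk x = (G.induce S).connectedComponentMk ⟨x0, hx0⟩} = Set.univ := by
    ext y
    simp only [Set.mem_setOf_eq, Set.mem_univ, iff_true]
    exact SimpleGraph.ConnectedComponent.eq.mpr (hconn y ⟨x0, hx0⟩)
  rw [h1, Subtype.coe_image_univ]

lemma eq_of_isComponentOf (hconn : (G.induce S).Preconnected)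
    (h : IsComponentOf G S C) : C = S := by
  obtain ⟨c, rfl⟩ := h
  obtain ⟨x0, rfl⟩ := c.exists_rep
  have h1 : {x : ↥S | (G.induce S).connectedComponentMk x = Quot.mk _ x0} = Set.univ := by
    ext y
    simp only [Set.mem_setOf_eq, Set.mem_univ, iff_true]
    exact SimpleGraph.ConnectedComponent.eq.mpr (hconn y x0)
  rw [h1, Subtype.coe_image_univ]

lemma mem_of_walk (hclosed : ∀ a ∈ C, ∀ b ∈ S, G.Adj a b → b ∈ C) :
    ∀ {a b : ↥S} (_ : (G.induce S).Walk a b), (b : V) ∈ C → (a : V) ∈ C := by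
  intro a b p
  induction p with
  | nil => exact id
  | @cons a c b h p ih =>
      intro hb
      have hadj : G.Adj (a : V) (c : V) := h
      exact hclosed _ (ih hb) _ a.2 hadj.symm

lemma reach_up (hsub : C ⊆ S) : ∀ {a b : ↥C} (_ : (G.induce C).Walk a b),
    (G.induce S).Reachable ⟨a, hsub a.2⟩ ⟨b, hsub b.2⟩ := by
  intro a b p
  induction p with
  | nil => exact SimpleGraph.Reachable.refl _
  | @cons a c b h p ih =>
      exact (SimpleGraph.Adj.reachable
        (show (G.induce S).Adj ⟨a, hsub a.2⟩ ⟨c, hsub c.2⟩ from h)).trans ih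

lemma isComponentOf_of_closed (hsub : C ⊆ S) (hne : C.Nonempty)
    (hconn : (G.induce C).Preconnected)
    (hclosed : ∀ a ∈ C, ∀ b ∈ S, G.Adj a b → b ∈ C) : IsComponentOf G S C := by
  obtain ⟨x0, hx0⟩ := hne
  refine ⟨(G.induce S).connectedComponentMk ⟨x0, hsub hx0⟩, ?_⟩
  ext y
  constructor
  · intro hy
    refine ⟨⟨y, hsub hy⟩, ?_, rfl⟩
    obtain ⟨p⟩ := hconn (⟨y, hy⟩ : ↥C) ⟨x0, hx0⟩
    exact SimpleGraph.ConnectedComponent.eq.mpr (reach_up hsub p)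
  · rintro ⟨⟨y', hy'S⟩, hy'c, rfl⟩
    have hr : (G.induce S).Reachable ⟨y', hy'S⟩ ⟨x0, hsub hx0⟩ :=
      SimpleGraph.ConnectedComponent.eq.mp hy'c
    obtain ⟨p⟩ := hr
    exact mem_of_walk hclosed p hx0

lemma preconnected_of_hub {A : Set V} {z : V} (hz : z ∈ A)
    (h : ∀ x ∈ A, x = z ∨ G.Adj x z ∨ ∃ y ∈ A, G.Adj x y ∧ G.Adj y z) :
    (G.induce A).Preconnected := by
  have key : ∀ x : ↥A, (G.induce A).Reachable x ⟨z, hz⟩ := by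
    rintro ⟨x, hx⟩
    rcases h x hx with rfl | hadj | ⟨y, hy, h1, h2⟩
    · exact SimpleGraph.Reachable.refl _
    · exact SimpleGraph.Adj.reachable (by exact hadj : (G.induce A).Adj ⟨x, hx⟩ ⟨z, hz⟩)
    · exact (SimpleGraph.Adj.reachable (by exact h1 : (G.induce A).Adj ⟨x, hx⟩ ⟨y, hy⟩)).trans
        (SimpleGraph.Adj.reachable (by exact h2 : (G.induce A).Adj ⟨y, hy⟩ ⟨z, hz⟩))
  exact fun a b => (key a).trans (key b).symm

end Comp

section Weight
variable {V : Type*} [Fintype V] {w : V → ℝ} {A B : Set V}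
set_option linter.unusedSectionVars false

lemma setWeight_eq_sum (w : V → ℝ) (A : Set V) :
    setWeight w A = ∑ v ∈ Finset.univ.filter (· ∈ A), w v := by
  rw [setWeight, Finset.sum_filter]

lemma setWeight_nonneg (hw : ∀ v, 0 ≤ w v) (A : Set V) : 0 ≤ setWeight w A := by
  rw [setWeight_eq_sum]
  exact Finset.sum_nonneg fun v _ => hw v

lemma setWeight_mono (hw : ∀ v, 0 ≤ w v) (h : A ⊆ B) : setWeight w A ≤ setWeight w B := by
  rw [setWeight_eq_sum, setWeight_eq_sum]
  apply Finset.sum_le_sum_of_subset_of_nonneg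
  · intro v hv
    simp only [Finset.mem_filter, Finset.mem_univ, true_and] at hv ⊢
    exact h hv
  · exact fun v _ _ => hw v

lemma setWeight_union (h : Disjoint A B) :
    setWeight w (A ∪ B) = setWeight w A + setWeight w B := by
  rw [setWeight, setWeight, setWeight, ← Finset.sum_add_distrib]
  apply Finset.sum_congr rfl
  intro v _
  by_cases hA : v ∈ A
  · have hB : v ∉ B := fun hB => Set.disjoint_left.mp h hA hB
    simp [hA, hB]
  · by_cases hB : v ∈ B <;> simp [hA, hB]

lemma setWeight_congr (h : A = B) : setWeight w A = setWeight w B := by rw [h]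

lemma setWeight_image {α : Type*} [Fintype α] {J : Set α} {f : α → V}
    (hf : Set.InjOn f J) : setWeight w (f '' J) = ∑ j ∈ J.toFinset, w (f j) := by
  rw [setWeight_eq_sum]
  have : Finset.univ.filter (· ∈ f '' J) = J.toFinset.image f := by
    ext x
    simp [Set.mem_toFinset, Set.mem_image, eq_comm]
  rw [this, Finset.sum_image]
  intro a ha b hb hab
  exact hf (Set.mem_toFinset.mp ha) (Set.mem_toFinset.mp hb) hab

lemma setWeight_image_le {α : Type*} [Fintype α] {J : Set α} {f g : α → V}
    (hf : Set.InjOn f J) (hg : Set.InjOn g J) (h : ∀ j ∈ J, w (f j) ≤ w (g j)) :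
    setWeight w (f '' J) ≤ setWeight w (g '' J) := by
  rw [setWeight_image hf, setWeight_image hg]
  exact Finset.sum_le_sum fun j hj => h j (Set.mem_toFinset.mp hj)

end Weight

section Book
variable {m : ℕ}

abbrev hubv (m : ℕ) (t : Fin 2) : (Fin 1 ⊕ Fin m) × Fin 2 := (Sum.inl 0, t)
abbrev pgv (m : ℕ) (i : Fin m) (t : Fin 2) : (Fin 1 ⊕ Fin m) × Fin 2 := (Sum.inr i, t)

lemma fin2_cases (s t x : Fin 2) (h : s ≠ t) : x = s ∨ x = t := by omega

lemma fin2_eq_of_ne {a b c : Fin 2} (h1 : a ≠ c) (h2 : b ≠ c) : a = b := by omega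

lemma book_adj {x y : (Fin 1 ⊕ Fin m) × Fin 2} :
    (bookGraph m).Adj x y ↔
      (x.2 = y.2 ∧ ((x.1.isLeft ∧ y.1.isRight) ∨ (x.1.isRight ∧ y.1.isLeft)))
        ∨ (x.1 = y.1 ∧ x.2 ≠ y.2) := by
  rw [bookGraph, SimpleGraph.boxProd_adj, pathGraph_two_eq_top]
  simp only [completeBipartiteGraph_adj, SimpleGraph.top_adj]
  tauto

lemma adj_hub_hub {s t : Fin 2} (h : s ≠ t) : (bookGraph m).Adj (hubv m s) (hubv m t) := by
  rw [book_adj]; right; exact ⟨rfl, h⟩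

lemma adj_pg_hub {i : Fin m} {s : Fin 2} : (bookGraph m).Adj (pgv m i s) (hubv m s) := by
  rw [book_adj]; left; simp

lemma adj_pg_pg {i : Fin m} {s t : Fin 2} (h : s ≠ t) :
    (bookGraph m).Adj (pgv m i s) (pgv m i t) := by
  rw [book_adj]; right; exact ⟨rfl, h⟩

lemma adj_hub_iff {s : Fin 2} {y : (Fin 1 ⊕ Fin m) × Fin 2} :
    (bookGraph m).Adj (hubv m s) y ↔
      (∃ t, t ≠ s ∧ y = hubv m t) ∨ ∃ i, y = pgv m i s := by
  obtain ⟨a | i, t⟩ := y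
  · have ha : a = 0 := Subsingleton.elim _ _
    subst ha
    rw [book_adj]
    simp only [hubv, Prod.ext_iff, Prod.mk.injEq, Sum.isLeft_inl, Sum.isRight_inl,
      Sum.isLeft_inr, Sum.isRight_inr, Sum.inl.injEq, Sum.inr.injEq, pgv]
    constructor
    · rintro (⟨_, h⟩ | ⟨_, h2⟩)
      · simp at h
      · exact Or.inl ⟨t, fun h => h2 h.symm, by simp⟩
    · rintro (⟨t', ht', _, rfl⟩ | ⟨i, hi, _⟩) <;> simp_all
      exact fun h => ht' h.symm
  · rw [book_adj]
    simp only [hubv, Prod.mk.injEq, Sum.isLeft_inl, Sum.isRight_inl,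
      Sum.isLeft_inr, Sum.isRight_inr, pgv, Sum.inr.injEq]
    constructor
    · rintro (⟨rfl, _⟩ | ⟨h1, _⟩)
      · exact Or.inr ⟨i, rfl, rfl⟩
      · simp at h1
    · rintro (⟨t', _, h, _⟩ | ⟨j, hj, rfl⟩)
      · simp at h
      · exact Or.inl ⟨rfl, by simp⟩

lemma adj_pg_iff {i : Fin m} {s : Fin 2} {y : (Fin 1 ⊕ Fin m) × Fin 2} :
    (bookGraph m).Adj (pgv m i s) y ↔
      y = hubv m s ∨ ∃ t, t ≠ s ∧ y = pgv m i t := by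
  obtain ⟨a | j, t⟩ := y
  · have ha : a = 0 := Subsingleton.elim _ _
    subst ha
    rw [book_adj]
    simp only [hubv, Prod.mk.injEq, Sum.isLeft_inl, Sum.isRight_inl,
      Sum.isLeft_inr, Sum.isRight_inr, pgv, Sum.inr.injEq, Sum.inl.injEq]
    constructor
    · rintro (⟨h1, _⟩ | ⟨h1, _⟩)
      · exact Or.inl ⟨by simp, h1.symm⟩
      · simp at h1
    · rintro (⟨_, rfl⟩ | ⟨t', _, h, _⟩) <;> simp_all
  · rw [book_adj]
    simp only [hubv, Prod.mk.injEq, Sum.isLeft_inl, Sum.isRight_inl,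
      Sum.isLeft_inr, Sum.isRight_inr, pgv, Sum.inr.injEq]
    constructor
    · rintro (⟨_, h⟩ | ⟨rfl, h2⟩)
      · simp at h
      · exact Or.inr ⟨t, fun h => h2 h.symm, rfl, rfl⟩
    · rintro (⟨_, h⟩ | ⟨t', ht', rfl, rfl⟩)
      · simp_all
      · exact Or.inr ⟨rfl, fun h => ht' h.symm⟩

end Book
section Main
set_option linter.unusedSectionVars false
variable {m : ℕ} {w : (Fin 1 ⊕ Fin m) × Fin 2 → ℝ} {S : Set ((Fin 1 ⊕ Fin m) × Fin 2)}
variable {s t : Fin 2}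

lemma setWeight_singleton {V : Type*} [Fintype V] (w : V → ℝ) (a : V) :
    setWeight w {a} = w a := by
  rw [setWeight_eq_sum]
  have : Finset.univ.filter (· ∈ ({a} : Set V)) = {a} := by
    ext x; simp
  rw [Finset.sum_filter]; simp

lemma setWeight_diff {V : Type*} [Fintype V] {w : V → ℝ} {A B : Set V} (h : B ⊆ A) :
    setWeight w (A \ B) = setWeight w A - setWeight w B := by
  have h1 : Disjoint (A \ B) B := Set.disjoint_sdiff_left
  have h2 := setWeight_union (w := w) h1
  rw [Set.diff_union_of_subset h] at h2
  linarith

lemma vert_cases (x : (Fin 1 ⊕ Fin m) × Fin 2) :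
    (∃ t0, x = hubv m t0) ∨ ∃ i t0, x = pgv m i t0 := by
  obtain ⟨a | i, t0⟩ := x
  · exact Or.inl ⟨t0, by simp [hubv, Subsingleton.elim a 0]⟩
  · exact Or.inr ⟨i, t0, rfl⟩

lemma pre_both_hubs {A : Set ((Fin 1 ⊕ Fin m) × Fin 2)} (hst : s ≠ t)
    (hs : hubv m s ∈ A) (ht : hubv m t ∈ A) : ((bookGraph m).induce A).Preconnected := by
  apply preconnected_of_hub hs
  intro x hx
  rcases vert_cases x with ⟨t', rfl⟩ | ⟨i, t', rfl⟩
  · rcases fin2_cases s t t' hst with rfl | rfl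
    · exact Or.inl rfl
    · exact Or.inr (Or.inl (adj_hub_hub (Ne.symm hst)))
  · rcases fin2_cases s t t' hst with rfl | rfl
    · exact Or.inr (Or.inl adj_pg_hub)
    · exact Or.inr (Or.inr ⟨_, ht, adj_pg_hub, adj_hub_hub (Ne.symm hst)⟩)

def C0set (m : ℕ) (s t : Fin 2) (S : Set ((Fin 1 ⊕ Fin m) × Fin 2)) :
    Set ((Fin 1 ⊕ Fin m) × Fin 2) :=
  {x | x = hubv m s ∨ ∃ i, (x = pgv m i s ∧ pgv m i s ∈ S)
    ∨ (x = pgv m i t ∧ pgv m i s ∈ S ∧ pgv m i t ∈ S)}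

def Jset (m : ℕ) (s t : Fin 2) (S : Set ((Fin 1 ⊕ Fin m) × Fin 2)) : Set (Fin m) :=
  {i | pgv m i t ∈ S ∧ pgv m i s ∉ S}

lemma Jset_compl : Jset m t s Sᶜ = Jset m s t S := by
  ext i; simp [Jset]; tauto

lemma mem_C0_hub {t' : Fin 2} : hubv m t' ∈ C0set m s t S ↔ t' = s := by
  simp [C0set, hubv, pgv, Prod.ext_iff]

lemma mem_C0_pg_s (hst : s ≠ t) {i : Fin m} :
    pgv m i s ∈ C0set m s t S ↔ pgv m i s ∈ S := by
  simp only [C0set, Set.mem_setOf_eq, pgv, hubv, Prod.mk.injEq, Sum.inr.injEq]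
  constructor
  · rintro (⟨h, _⟩ | ⟨j, ⟨⟨rfl, _⟩, hj⟩ | ⟨⟨_, h⟩, _⟩⟩)
    · simp at h
    · exact hj
    · exact (hst h).elim
  · intro h; exact Or.inr ⟨i, Or.inl ⟨by simp, h⟩⟩

lemma mem_C0_pg_t (hst : s ≠ t) {i : Fin m} :
    pgv m i t ∈ C0set m s t S ↔ pgv m i s ∈ S ∧ pgv m i t ∈ S := by
  simp only [C0set, Set.mem_setOf_eq, pgv, hubv, Prod.mk.injEq, Sum.inr.injEq]
  constructor
  · rintro (⟨h, _⟩ | ⟨j, ⟨⟨rfl, h⟩, _⟩ | ⟨⟨rfl, _⟩, hj⟩⟩)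
    · simp at h
    · exact absurd h hst.symm
    · exact hj
  · intro h; exact Or.inr ⟨i, Or.inr ⟨by simp, h⟩⟩

lemma mem_pg_image {J : Set (Fin m)} {i : Fin m} {a b : Fin 2} :
    pgv m i a ∈ (fun j => pgv m j b) '' J ↔ a = b ∧ i ∈ J := by
  simp only [Set.mem_image, pgv, Prod.mk.injEq, Sum.inr.injEq]
  constructor
  · rintro ⟨j, hj, rfl, rfl⟩; exact ⟨rfl, hj⟩
  · rintro ⟨rfl, hi⟩; exact ⟨i, hi, rfl, rfl⟩

lemma hub_not_mem_pg_image {J : Set (Fin m)} {a b : Fin 2} :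
    hubv m a ∉ (fun j => pgv m j b) '' J := by
  rintro ⟨j, _, h⟩
  simp [hubv, pgv, Prod.ext_iff] at h

end Main

section Main2
set_option linter.unusedSectionVars false
variable {m : ℕ} {w : (Fin 1 ⊕ Fin m) × Fin 2 → ℝ} {S : Set ((Fin 1 ⊕ Fin m) × Fin 2)}
variable {s t : Fin 2}

lemma C0_sub (hs : hubv m s ∈ S) : C0set m s t S ⊆ S := by
  rintro x (rfl | ⟨i, ⟨rfl, h⟩ | ⟨rfl, _, h⟩⟩) <;> assumption

lemma hub_mem_C0 : hubv m s ∈ C0set m s t S := Or.inl rfl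

lemma C0_pre (hst : s ≠ t) : ((bookGraph m).induce (C0set m s t S)).Preconnected := by
  apply preconnected_of_hub (hub_mem_C0 (t := t) (S := S))
  rintro x (rfl | ⟨i, ⟨rfl, hi⟩ | ⟨rfl, hi, hi'⟩⟩)
  · exact Or.inl rfl
  · exact Or.inr (Or.inl adj_pg_hub)
  · exact Or.inr (Or.inr ⟨pgv m i s, Or.inr ⟨i, Or.inl ⟨rfl, hi⟩⟩,
      adj_pg_pg (Ne.symm hst), adj_pg_hub⟩)

lemma C0_isComponent (hst : s ≠ t) (hs : hubv m s ∈ S) (ht : hubv m t ∉ S) :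
    IsComponentOf (bookGraph m) S (C0set m s t S) := by
  apply isComponentOf_of_closed (C0_sub hs) ⟨hubv m s, hub_mem_C0⟩ (C0_pre hst)
  rintro a (rfl | ⟨i, ⟨rfl, hi⟩ | ⟨rfl, hi, hi'⟩⟩) b hb hadj
  · rcases adj_hub_iff.mp hadj with ⟨t', ht', rfl⟩ | ⟨i, rfl⟩
    · have h2 : t' = t := fin2_eq_of_ne ht' (Ne.symm hst)
      subst h2
      exact absurd hb ht
    · exact Or.inr ⟨i, Or.inl ⟨rfl, hb⟩⟩
  · rcases adj_pg_iff.mp hadj with rfl | ⟨t', ht', rfl⟩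
    · exact Or.inl rfl
    · have h2 : t' = t := fin2_eq_of_ne ht' (Ne.symm hst)
      subst h2
      exact Or.inr ⟨i, Or.inr ⟨rfl, hi, hb⟩⟩
  · rcases adj_pg_iff.mp hadj with rfl | ⟨t', ht', rfl⟩
    · exact absurd hb ht
    · have h2 : t' = s := fin2_eq_of_ne ht' hst
      subst h2
      exact Or.inr ⟨i, Or.inl ⟨rfl, hi⟩⟩

lemma singleton_isComponent (hst : s ≠ t) (ht : hubv m t ∉ S) {i : Fin m}
    (hi : i ∈ Jset m s t S) : IsComponentOf (bookGraph m) S {pgv m i t} := by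
  apply isComponentOf_of_closed
  · intro x hx
    rw [Set.mem_singleton_iff] at hx
    subst hx
    exact hi.1
  · exact ⟨pgv m i t, rfl⟩
  · exact preconnected_of_hub rfl (fun x hx => Or.inl hx)
  · intro a ha b hb hadj
    rw [Set.mem_singleton_iff] at ha
    subst ha
    rcases adj_pg_iff.mp hadj with rfl | ⟨t', ht', rfl⟩
    · exact absurd hb ht
    · have h2 : t' = s := fin2_eq_of_ne ht' hst
      subst h2
      exact absurd hb hi.2

lemma S_decomp (hst : s ≠ t) (hs : hubv m s ∈ S) (ht : hubv m t ∉ S) :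
    S = C0set m s t S ∪ (fun i => pgv m i t) '' (Jset m s t S) := by
  ext x
  rw [Set.mem_union]
  rcases vert_cases x with ⟨t', rfl⟩ | ⟨i, t', rfl⟩
  · rcases fin2_cases s t t' hst with rfl | rfl
    · simp [mem_C0_hub, hub_not_mem_pg_image, hs]
    · simp [mem_C0_hub, hub_not_mem_pg_image, ht, Ne.symm hst]
  · rcases fin2_cases s t t' hst with rfl | rfl
    · rw [mem_C0_pg_s hst, mem_pg_image]
      simp only [Jset]
      constructor
      · exact Or.inl
      · rintro (h | ⟨h, _⟩)
        · exact h
        · exact absurd h hst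
    · rw [mem_C0_pg_t hst, mem_pg_image]
      simp only [Jset, Set.mem_setOf_eq, eq_self_iff_true, true_and]
      tauto

lemma T_compl (hst : s ≠ t) :
    (C0set m s t S ∪ (fun i => pgv m i s) '' (Jset m s t S))ᶜ
      = C0set m t s Sᶜ ∪ (fun i => pgv m i t) '' (Jset m s t S) := by
  ext x
  simp only [Set.mem_compl_iff, Set.mem_union, not_or]
  rcases vert_cases x with ⟨t', rfl⟩ | ⟨i, t', rfl⟩
  · rcases fin2_cases s t t' hst with rfl | rfl
    · simp [mem_C0_hub, hub_not_mem_pg_image, hst, Ne.symm hst]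
    · simp [mem_C0_hub, hub_not_mem_pg_image, hst, Ne.symm hst]
  · rcases fin2_cases s t t' hst with rfl | rfl
    · rw [mem_C0_pg_s hst, mem_pg_image, mem_C0_pg_t (Ne.symm hst), mem_pg_image]
      simp only [Jset, Set.mem_setOf_eq, Set.mem_compl_iff, hst, false_and, or_false,
        eq_self_iff_true, true_and]
      tauto
    · rw [mem_C0_pg_t hst, mem_pg_image, mem_C0_pg_s (Ne.symm hst), mem_pg_image]
      simp only [Jset, Set.mem_setOf_eq, Set.mem_compl_iff, Ne.symm hst, false_and, or_false,
        eq_self_iff_true, true_and]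
      tauto

lemma disj_C0_img_t (hst : s ≠ t) :
    Disjoint (C0set m s t S) ((fun i => pgv m i t) '' (Jset m s t S)) := by
  rw [Set.disjoint_left]
  rintro x (rfl | ⟨i, ⟨rfl, hi⟩ | ⟨rfl, hi, hi'⟩⟩) hx
  · exact hub_not_mem_pg_image hx
  · exact hst (mem_pg_image.mp hx).1
  · exact (mem_pg_image.mp hx).2.2 hi

lemma disj_C0_img_s (hst : s ≠ t) :
    Disjoint (C0set m s t S) ((fun i => pgv m i s) '' (Jset m s t S)) := by
  rw [Set.disjoint_left]
  rintro x (rfl | ⟨i, ⟨rfl, hi⟩ | ⟨rfl, hi, hi'⟩⟩) hx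
  · exact hub_not_mem_pg_image hx
  · exact (mem_pg_image.mp hx).2.2 hi
  · exact (Ne.symm hst) (mem_pg_image.mp hx).1

lemma pg_injOn {b : Fin 2} {J : Set (Fin m)} : Set.InjOn (fun j => pgv m j b) J := by
  intro a _ a' _ h
  simpa [pgv, Prod.ext_iff] using h

end Main2

section Case2
set_option linter.unusedSectionVars false
variable {m : ℕ} {w : (Fin 1 ⊕ Fin m) × Fin 2 → ℝ} {S : Set ((Fin 1 ⊕ Fin m) × Fin 2)}
variable {s t : Fin 2}

lemma case2 (hst : s ≠ t) (hw : ∀ v, 0 < w v)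
    (hs : hubv m s ∈ S) (ht : hubv m t ∉ S)
    (hsafe : ∀ C D, IsComponentOf (bookGraph m) S C → IsComponentOf (bookGraph m) Sᶜ D →
      Touches (bookGraph m) C D → setWeight w D ≤ setWeight w C) :
    ∃ T, IsConnSafeSet (bookGraph m) w T ∧ setWeight w T ≤ setWeight w S := by
  set C0 := C0set m s t S with hC0
  set D1 := C0set m t s Sᶜ with hD1
  set J := Jset m s t S with hJ
  set U := (fun i => pgv m i s) '' J with hU
  set VJ := (fun i => pgv m i t) '' J with hVJ
  set T := C0 ∪ U with hT
  have hsc : hubv m s ∈ Sᶜ ↔ False := by simp [hs]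
  have htc : hubv m t ∈ Sᶜ := ht
  -- component facts
  have hcompC0 : IsComponentOf (bookGraph m) S C0 := C0_isComponent hst hs ht
  have hcompD1 : IsComponentOf (bookGraph m) Sᶜ D1 := by
    exact C0_isComponent (S := Sᶜ) (Ne.symm hst) htc (by simp [hs])
  -- weight inequality e1
  have e1 : setWeight w D1 ≤ setWeight w C0 :=
    hsafe C0 D1 hcompC0 hcompD1 ⟨hubv m s, hub_mem_C0, hubv m t, hub_mem_C0, adj_hub_hub hst⟩
  -- e2
  have e2 : ∀ i ∈ J, w (pgv m i s) ≤ w (pgv m i t) := by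
    intro i hi
    have h1 : IsComponentOf (bookGraph m) S {pgv m i t} := singleton_isComponent hst ht hi
    have h2 : IsComponentOf (bookGraph m) Sᶜ {pgv m i s} := by
      have : i ∈ Jset m t s Sᶜ := by rw [Jset_compl]; exact hi
      exact singleton_isComponent (S := Sᶜ) (Ne.symm hst) (by simp [hs]) this
    have h4 := hsafe _ _ h1 h2 ⟨pgv m i t, rfl, pgv m i s, rfl, adj_pg_pg (Ne.symm hst)⟩
    rwa [setWeight_singleton, setWeight_singleton] at h4
  -- decompositions
  have hSdec : S = C0 ∪ VJ := S_decomp hst hs ht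
  have hScdec : Sᶜ = D1 ∪ U := by
    have := S_decomp (S := Sᶜ) (Ne.symm hst) htc (by simp [hs])
    rwa [Jset_compl] at this
  have hTc : Tᶜ = D1 ∪ VJ := T_compl hst
  -- weights
  have hwS : setWeight w S = setWeight w C0 + setWeight w VJ := by
    rw [hSdec]; exact setWeight_union (disj_C0_img_t hst)
  have hwT : setWeight w T = setWeight w C0 + setWeight w U := by
    rw [hT]; exact setWeight_union (disj_C0_img_s hst)
  have hwTc : setWeight w Tᶜ = setWeight w D1 + setWeight w VJ := by
    rw [hTc]
    apply setWeight_union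
    rw [Set.disjoint_left]
    rintro x (rfl | ⟨i, ⟨rfl, hi⟩ | ⟨rfl, hi, hi'⟩⟩) hx
    · exact hub_not_mem_pg_image hx
    · exact hi (mem_pg_image.mp hx).2.1
    · exact hst (mem_pg_image.mp hx).1
  have hUVJ : setWeight w U ≤ setWeight w VJ :=
    setWeight_image_le pg_injOn pg_injOn e2
  -- preconnectedness
  have hTpre : ((bookGraph m).induce T).Preconnected := by
    apply preconnected_of_hub (show hubv m s ∈ T from Or.inl hub_mem_C0)
    rintro x ((rfl | ⟨i, ⟨rfl, hi⟩ | ⟨rfl, hi, hi'⟩⟩) | ⟨i, hi, rfl⟩)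
    · exact Or.inl rfl
    · exact Or.inr (Or.inl adj_pg_hub)
    · exact Or.inr (Or.inr ⟨pgv m i s, Or.inl (Or.inr ⟨i, Or.inl ⟨rfl, hi⟩⟩),
        adj_pg_pg (Ne.symm hst), adj_pg_hub⟩)
    · exact Or.inr (Or.inl adj_pg_hub)
  have hTcpre : ((bookGraph m).induce (D1 ∪ VJ)).Preconnected := by
    apply preconnected_of_hub (show hubv m t ∈ D1 ∪ VJ from Or.inl hub_mem_C0)
    rintro x ((rfl | ⟨i, ⟨rfl, hi⟩ | ⟨rfl, hi, hi'⟩⟩) | ⟨i, hi, rfl⟩)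
    · exact Or.inl rfl
    · exact Or.inr (Or.inl adj_pg_hub)
    · exact Or.inr (Or.inr ⟨pgv m i t, Or.inl (Or.inr ⟨i, Or.inl ⟨rfl, hi⟩⟩),
        adj_pg_pg hst, adj_pg_hub⟩)
    · exact Or.inr (Or.inl adj_pg_hub)
  have hsT : hubv m s ∈ T := Or.inl hub_mem_C0
  have htTc : hubv m t ∈ Tᶜ := by rw [hTc]; exact Or.inl hub_mem_C0
  have hsTc : hubv m s ∉ D1 ∪ VJ := by
    rintro (h | h)
    · exact hst (mem_C0_hub.mp h)
    · exact hub_not_mem_pg_image h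
  rcases le_total (setWeight w (D1 ∪ VJ)) (setWeight w T) with hle | hle
  · refine ⟨T, ⟨⟨⟨hubv m s, hsT⟩, ?_, ?_⟩, ?_⟩, ?_⟩
    · intro h
      rw [h] at htTc
      simp at htTc
    · intro C D hC hD _
      rw [eq_of_isComponentOf hTpre hC]
      rw [hTc] at hD
      rw [eq_of_isComponentOf hTcpre hD]
      exact hle
    · have : Nonempty ↥T := Set.Nonempty.to_subtype ⟨hubv m s, hsT⟩
      exact ⟨hTpre⟩
    · rw [hwT, hwS]
      linarith
  · refine ⟨D1 ∪ VJ, ⟨⟨⟨hubv m t, Or.inl hub_mem_C0⟩, ?_, ?_⟩, ?_⟩, ?_⟩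
    · intro h
      rw [h] at hsTc
      simp at hsTc
    · intro C D hC hD _
      rw [eq_of_isComponentOf hTcpre hC]
      have hDD : (D1 ∪ VJ)ᶜ = T := by rw [← hTc, compl_compl]
      rw [hDD] at hD
      rw [eq_of_isComponentOf hTpre hD]
      exact hle
    · have : Nonempty ↥(D1 ∪ VJ) := Set.Nonempty.to_subtype ⟨hubv m t, Or.inl hub_mem_C0⟩
      exact ⟨hTcpre⟩
    · rw [← hTc, hwTc, hwS]
      linarith

end Case2

section Case3
set_option linter.unusedSectionVars false
variable {m : ℕ} {w : (Fin 1 ⊕ Fin m) × Fin 2 → ℝ} {S : Set ((Fin 1 ⊕ Fin m) × Fin 2)}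

lemma case3 (hw : ∀ v, 0 < w v)
    (h0 : hubv m 0 ∉ S) (h1 : hubv m 1 ∉ S) (hne : S.Nonempty) (hnuniv : S ≠ Set.univ)
    (hsafe : ∀ C D, IsComponentOf (bookGraph m) S C → IsComponentOf (bookGraph m) Sᶜ D →
      Touches (bookGraph m) C D → setWeight w D ≤ setWeight w C) :
    ∃ T, IsConnSafeSet (bookGraph m) w T ∧ setWeight w T ≤ setWeight w S := by
  set P : Fin m → Set ((Fin 1 ⊕ Fin m) × Fin 2) :=
    fun i => S ∩ {pgv m i 0, pgv m i 1} with hP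
  have hPsubS : ∀ i, P i ⊆ S := fun i => Set.inter_subset_left
  have hub_not_P : ∀ (i) (t' : Fin 2), hubv m t' ∉ P i := by
    rintro i t' ⟨_, h⟩
    simp [hubv, pgv, Prod.ext_iff] at h
  have hmemP : ∀ x ∈ S, ∃ i, x ∈ P i := by
    intro x hx
    rcases vert_cases x with ⟨t', rfl⟩ | ⟨i, t', rfl⟩
    · rcases fin2_cases 0 1 t' (by decide) with rfl | rfl
      · exact absurd hx h0
      · exact absurd hx h1
    · refine ⟨i, hx, ?_⟩
      rcases fin2_cases 0 1 t' (by decide) with rfl | rfl <;> simp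
  have hPpair : ∀ i, ∀ x ∈ P i, x = pgv m i 0 ∨ x = pgv m i 1 := by
    rintro i x ⟨_, hx⟩
    simpa using hx
  have hPpre : ∀ i, ((bookGraph m).induce (P i)).Preconnected := by
    intro i
    rcases Set.eq_empty_or_nonempty (P i) with he | ⟨z, hz⟩
    · intro x
      exact absurd x.2 (Set.eq_empty_iff_forall_notMem.mp he _)
    · apply preconnected_of_hub hz
      intro x hx
      rcases hPpair i x hx with rfl | rfl <;> rcases hPpair i z hz with h | h
      · exact Or.inl h.symm
      · exact Or.inr (Or.inl (h ▸ adj_pg_pg (by decide)))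
      · exact Or.inr (Or.inl (h ▸ adj_pg_pg (by decide)))
      · exact Or.inl h.symm
  have hPcomp : ∀ i, (P i).Nonempty → IsComponentOf (bookGraph m) S (P i) := by
    intro i hni
    apply isComponentOf_of_closed (hPsubS i) hni (hPpre i)
    intro a ha b hb hadj
    rcases hPpair i a ha with rfl | rfl
    · rcases adj_pg_iff.mp hadj with rfl | ⟨t', ht', rfl⟩
      · exact absurd hb h0
      · have h2 : t' = 1 := fin2_eq_of_ne ht' (by decide)
        subst h2
        exact ⟨hb, by simp⟩
    · rcases adj_pg_iff.mp hadj with rfl | ⟨t', ht', rfl⟩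
      · exact absurd hb h1
      · have h2 : t' = 0 := fin2_eq_of_ne ht' (by decide)
        subst h2
        exact ⟨hb, by simp⟩
  have hScpre : ((bookGraph m).induce Sᶜ).Preconnected :=
    pre_both_hubs (by decide) (show hubv m 0 ∈ Sᶜ from h0) (show hubv m 1 ∈ Sᶜ from h1)
  have hwP : ∀ i, (P i).Nonempty → setWeight w Sᶜ ≤ setWeight w (P i) := by
    rintro i ⟨z, hz⟩
    refine hsafe (P i) Sᶜ (hPcomp i ⟨z, hz⟩)
      (isComponentOf_self ⟨hubv m 0, h0⟩ hScpre) ?_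
    rcases hPpair i z hz with rfl | rfl
    · exact ⟨pgv m i 0, hz, hubv m 0, h0, adj_pg_hub⟩
    · exact ⟨pgv m i 1, hz, hubv m 1, h1, adj_pg_hub⟩
  obtain ⟨x1, hx1⟩ := id hne
  obtain ⟨i1, hx1P⟩ := hmemP x1 hx1
  by_cases hall : ∀ x ∈ S, x ∈ P i1
  · -- S = P i1 : S itself is connected
    have hSP : S = P i1 := Set.Subset.antisymm hall (hPsubS i1)
    refine ⟨S, ⟨⟨hne, hnuniv, hsafe⟩, ?_⟩, le_refl _⟩
    have : Nonempty ↥S := hne.to_subtype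
    refine ⟨?_⟩
    have := hPpre i1
    rwa [← hSP] at this
  · push_neg at hall
    obtain ⟨x2, hx2S, hx2P⟩ := hall
    obtain ⟨i2, hx2P2⟩ := hmemP x2 hx2S
    have hi12 : i2 ≠ i1 := fun h => hx2P (h ▸ hx2P2)
    have hFne : (Finset.univ.filter (fun i => (P i).Nonempty)).Nonempty :=
      ⟨i1, by simp; exact ⟨x1, hx1P⟩⟩
    obtain ⟨i0, hi0mem, hi0min⟩ :=
      Finset.exists_min_image _ (fun i => setWeight w (P i)) hFne
    have hi0ne : (P i0).Nonempty := by simpa using hi0mem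
    obtain ⟨j, hjne, hji0⟩ : ∃ j, (P j).Nonempty ∧ j ≠ i0 := by
      by_cases h : i1 = i0
      · exact ⟨i2, ⟨x2, hx2P2⟩, h ▸ hi12⟩
      · exact ⟨i1, ⟨x1, hx1P⟩, h⟩
    set T := (P i0)ᶜ with hTdef
    have hhubT : ∀ t' : Fin 2, hubv m t' ∈ T := fun t' => hub_not_P i0 t'
    have hTpre : ((bookGraph m).induce T).Preconnected :=
      pre_both_hubs (by decide) (hhubT 0) (hhubT 1)
    have hPj_sub_T : P j ⊆ T := by
      intro x hx hx0
      rcases hPpair j x hx with rfl | rfl <;> rcases hPpair i0 _ hx0 with h | h <;>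
        · exfalso
          apply hji0
          simpa [pgv, Prod.ext_iff] using h
    have hsafeT : IsSafeSet (bookGraph m) w T := by
      refine ⟨⟨hubv m 0, hhubT 0⟩, ?_, ?_⟩
      · intro h
        obtain ⟨z, hz⟩ := hi0ne
        have hzT : z ∈ T := h.symm ▸ Set.mem_univ z
        exact hzT hz
      · intro C D hC hD _
        have hTc : Tᶜ = P i0 := compl_compl _
        rw [eq_of_isComponentOf hTpre hC]
        rw [hTc] at hD
        rw [eq_of_isComponentOf (hPpre i0) hD]
        calc setWeight w (P i0) ≤ setWeight w (P j) := hi0min j (by simp; exact hjne)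
          _ ≤ setWeight w T := setWeight_mono (fun v => (hw v).le) hPj_sub_T
    have hwT : setWeight w T ≤ setWeight w S := by
      have hTeq : T = (S \ P i0) ∪ Sᶜ := by
        ext x
        simp only [hTdef, Set.mem_compl_iff, Set.mem_union, Set.mem_diff]
        constructor
        · intro hx
          by_cases hxS : x ∈ S
          · exact Or.inl ⟨hxS, hx⟩
          · exact Or.inr hxS
        · rintro (⟨_, hx⟩ | hx)
          · exact hx
          · exact fun hPx => hx (hPsubS i0 hPx)
      have hdisj : Disjoint (S \ P i0) Sᶜ := by
        rw [Set.disjoint_left]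
        rintro x ⟨hxS, _⟩ hxc
        exact hxc hxS
      rw [setWeight_congr hTeq, setWeight_union hdisj, setWeight_diff (hPsubS i0)]
      have := hwP i0 hi0ne
      linarith
    refine ⟨T, ⟨hsafeT, ?_⟩, hwT⟩
    have : Nonempty ↥T := Set.Nonempty.to_subtype ⟨hubv m 0, hhubT 0⟩
    exact ⟨hTpre⟩

end Case3

section Final
set_option linter.unusedSectionVars false
variable {m : ℕ} {w : (Fin 1 ⊕ Fin m) × Fin 2 → ℝ}

lemma key_lemma (hw : ∀ v, 0 < w v) {S : Set ((Fin 1 ⊕ Fin m) × Fin 2)}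
    (hS : IsSafeSet (bookGraph m) w S) :
    ∃ T, IsConnSafeSet (bookGraph m) w T ∧ setWeight w T ≤ setWeight w S := by
  obtain ⟨hne, hnuniv, hsafe⟩ := hS
  by_cases h0 : hubv m 0 ∈ S <;> by_cases h1 : hubv m 1 ∈ S
  · -- both hubs: S is connected
    refine ⟨S, ⟨⟨hne, hnuniv, hsafe⟩, ?_⟩, le_refl _⟩
    have : Nonempty ↥S := hne.to_subtype
    exact ⟨pre_both_hubs (by decide) h0 h1⟩
  · exact case2 (by decide : (0 : Fin 2) ≠ 1) hw h0 h1 hsafe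
  · exact case2 (by decide : (1 : Fin 2) ≠ 0) hw h1 h0 hsafe
  · exact case3 hw h0 h1 hne hnuniv hsafe

theorem stmt_16 (m : ℕ) (hm : 1 ≤ m) : InGcs (bookGraph m) := by
  intro w hw
  unfold safeNumber connSafeNumber
  set A := setWeight w '' {S | IsSafeSet (bookGraph m) w S} with hA
  set B := setWeight w '' {S | IsConnSafeSet (bookGraph m) w S} with hB
  have hBA : B ⊆ A := by
    rintro b ⟨S, hS, rfl⟩
    exact ⟨S, hS.1, rfl⟩
  rcases Set.eq_empty_or_nonempty A with hAe | hAne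
  · have hBe : B = ∅ := Set.subset_empty_iff.mp (fun x hx => hAe ▸ hBA hx)
    rw [hAe, hBe]
  · have hBne : B.Nonempty := by
      obtain ⟨a, S, hS, rfl⟩ := hAne
      obtain ⟨T, hT, _⟩ := key_lemma hw hS
      exact ⟨setWeight w T, T, hT, rfl⟩
    have hbdd : BddBelow A := by
      refine ⟨0, ?_⟩
      rintro a ⟨S, _, rfl⟩
      exact setWeight_nonneg (fun v => (hw v).le) _
    apply le_antisymm
    · exact csInf_le_csInf hbdd hBne hBA
    · apply le_csInf hAne
      rintro a ⟨S, hS, rfl⟩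
      obtain ⟨T, hT, hle⟩ := key_lemma hw hS
      exact le_trans (csInf_le (hbdd.mono hBA) ⟨T, hT, rfl⟩) hle

end Final
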